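/- Let X be a compact Hausdorff space, x₀ ∈ X, and f, g ∈ C(X) with f(x₀) ≠ g(x₀) and |f(x₀)| ≤ |g(x₀)|. Then there exists a continuous function h : X → [0,1] with h(x₀) = 1 such that the range of g·h is not contained in the set {t·z : t ∈ [0,1], z ∈ range(f·h)} closure, i.e., range(f·h) ≠ range(g·h). -/

import Mathlib

theorem stmt6 {X : Type*} [TopologicalSpace X] [CompactSpace X] [T2Space X]
    (x₀ : X) (f g : C(X, ℂ)) (hne : f x₀ ≠ g x₀)
    (habs : ‖f x₀‖ ≤ ‖g x₀‖) :
    ∃ h : C(X, ℝ), (∀ x, h x ∈ Set.Icc (0 : ℝ) 1) ∧ h x₀ = 1 ∧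
      Set.range (fun x => f x * (h x : ℂ)) ≠
        Set.range (fun x => g x * (h x : ℂ)) := by
  have hd : 0 < ‖f x₀ - g x₀‖ := by
    rw [norm_pos_iff, sub_ne_zero]; exact hne
  set d := ‖f x₀ - g x₀‖ with hdd
  set ε := d / 3 with hε
  have hεpos : 0 < ε := by positivity
  set U : Set X := {x | ‖f x - f x₀‖ < ε} with hUdef
  have hUopen : IsOpen U := by
    have hc : Continuous fun x => ‖f x - f x₀‖ :=
      (continuous_norm.comp ((map_continuous f).sub continuous_const))
    exact isOpen_lt hc continuous_const
  have hx0U : x₀ ∈ U := by simp [hUdef, hεpos]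
  obtain ⟨h, h0, h1, hmem⟩ := exists_continuous_zero_one_of_isClosed
    hUopen.isClosed_compl isClosed_singleton
    (by simpa [Set.disjoint_singleton_right] using hx0U)
  have hx1 : h x₀ = 1 := h1 rfl
  refine ⟨h, hmem, hx1, ?_⟩
  intro heq
  have hg : g x₀ ∈ Set.range (fun x => g x * (h x : ℂ)) := ⟨x₀, by simp [hx1]⟩
  rw [← heq] at hg
  obtain ⟨x, hx⟩ := hg
  simp only at hx
  -- hx : f x * ↑(h x) = g x₀
  have ht0 : (0 : ℝ) ≤ h x := (hmem x).1
  have ht1 : h x ≤ 1 := (hmem x).2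
  have habsval : ‖f x‖ * h x = ‖g x₀‖ := by
    have := congrArg (‖·‖) hx
    rwa [norm_mul, Complex.norm_real, Real.norm_eq_abs, abs_of_nonneg ht0] at this
  by_cases hxU : x ∈ U
  · have h1 : ‖f x - f x₀‖ < ε := hxU
    have h2 : ‖f x‖ ≤ ‖f x₀‖ + ε := by
      calc ‖f x‖ = ‖(f x - f x₀) + f x₀‖ := by ring_nf
        _ ≤ ‖f x - f x₀‖ + ‖f x₀‖ := norm_add_le _ _
        _ ≤ ‖f x₀‖ + ε := by linarith
    have h3 : ‖f x - g x₀‖ = ‖f x‖ - ‖g x₀‖ := by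
      have : f x - g x₀ = f x * (1 - (h x : ℂ)) := by rw [mul_sub, mul_one, hx]
      rw [this, norm_mul]
      have : ‖1 - (h x : ℂ)‖ = 1 - h x := by
        rw [show (1 : ℂ) - (h x : ℂ) = ((1 - h x : ℝ) : ℂ) by push_cast; ring,
          Complex.norm_real, Real.norm_eq_abs, abs_of_nonneg (by linarith)]
      rw [this, mul_sub, mul_one, habsval]
    have h4 : d ≤ ‖f x₀ - f x‖ + ‖f x - g x₀‖ := by
      rw [hdd]
      simpa using norm_add_le (f x₀ - f x) (f x - g x₀)
    have h5 : ‖f x₀ - f x‖ = ‖f x - f x₀‖ := by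
      rw [← norm_neg]; ring_nf
    rw [h5, h3] at h4
    have : d < ε + (‖f x₀‖ + ε - ‖g x₀‖) := by linarith
    rw [hε] at this
    linarith
  · have hz : h x = 0 := h0 hxU
    rw [hz] at hx
    simp at hx
    have : ‖g x₀‖ = 0 := by rw [← hx]; simp
    have hf0 : ‖f x₀‖ = 0 := le_antisymm (this ▸ habs) (norm_nonneg _)
    rw [norm_eq_zero] at this hf0
    exact hne (by rw [this, hf0])
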